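/- Let K be a field and R a Noetherian commutative ℕ-graded K-algebra which is an integral domain with R₀ = K·1. Let f₁,…,f_n ∈ R be homogeneous elements of positive degree which are algebraically independent over K, let A := K[f₁,…,f_n] ⊆ R, and let g₁,…,g_m ∈ R be homogeneous elements such that R is a free A-module with basis g₁,…,g_m. Then every homogeneous component R_d is finite-dimensional over K and the Hilbert series of R satisfies, as an identity of formal power series over ℤ, (Σ_{d≥0} dim_K(R_d)·t^d) · Π_{j=1}^{n} (1 − t^{deg(f_j)}) = t^{deg(g₁)} + … + t^{deg(g_m)}. -/

import Mathlib

open PowerSeries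

/-- number of solutions of `∑ αⱼ wⱼ = d` -/
noncomputable def wcard {n : ℕ} (w : Fin n → ℕ) (d : ℕ) : ℕ :=
  Nat.card {α : Fin n → ℕ // ∑ j, α j * w j = d}

lemma wsol_finite {n : ℕ} {w : Fin n → ℕ} (hw : ∀ j, 0 < w j) (c d : ℕ) :
    Finite {α : Fin n → ℕ // (∑ j, α j * w j) + c = d} := by
  have hbd : ∀ (α : Fin n → ℕ), ((∑ j, α j * w j) + c = d) → ∀ j, α j ≤ d := by
    intro α hα j
    calc α j ≤ α j * w j := Nat.le_mul_of_pos_right _ (hw j)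
      _ ≤ ∑ j, α j * w j :=
        Finset.single_le_sum (f := fun j => α j * w j) (fun _ _ => Nat.zero_le _)
          (Finset.mem_univ j)
      _ ≤ d := by omega
  apply Finite.of_injective
    (fun α : {α : Fin n → ℕ // (∑ j, α j * w j) + c = d} =>
      (fun j => (⟨α.1 j, Nat.lt_succ_of_le (hbd α.1 α.2 j)⟩ : Fin (d+1))))
  intro a b hab
  ext j
  exact congrArg Fin.val (congrFun hab j)

lemma nat_card_split {X : Type*} (P Q : X → Prop) [Finite {x // P x}] :
    Nat.card {x // P x} = Nat.card {x // P x ∧ Q x} + Nat.card {x // P x ∧ ¬ Q x} := by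
  classical
  haveI : Finite {x // P x ∧ Q x} :=
    Finite.of_injective (fun y => (⟨y.1, y.2.1⟩ : {x // P x}))
      (fun a b h => Subtype.ext (by simpa [Subtype.ext_iff] using h))
  haveI : Finite {x // P x ∧ ¬ Q x} :=
    Finite.of_injective (fun y => (⟨y.1, y.2.1⟩ : {x // P x}))
      (fun a b h => Subtype.ext (by simpa [Subtype.ext_iff] using h))
  have e : {x // P x ∧ Q x} ⊕ {x // P x ∧ ¬ Q x} ≃ {x // P x} :=
    Equiv.sumCongr (Equiv.subtypeSubtypeEquivSubtypeInter P Q).symm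
        (Equiv.subtypeSubtypeEquivSubtypeInter P (fun x => ¬ Q x)).symm |>.trans
      (Equiv.sumCompl fun y : {x // P x} => Q y.1)
  rw [← Nat.card_congr e, Nat.card_sum]

noncomputable def wequiv0 {n : ℕ} (w : Fin (n+1) → ℕ) (d : ℕ) :
    {α : Fin (n+1) → ℕ // (∑ j, α j * w j) = d ∧ α 0 = 0}
      ≃ {β : Fin n → ℕ // ∑ j, β j * (w ∘ Fin.succ) j = d} := by
  refine ⟨fun α => ⟨fun j => α.1 j.succ, ?_⟩, fun β => ⟨Fin.cons 0 β.1, ?_, ?_⟩, ?_, ?_⟩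
  · obtain ⟨α, hα, h0⟩ := α
    simp only [Fin.sum_univ_succ, h0, zero_mul, zero_add] at hα
    simpa using hα
  · obtain ⟨β, hβ⟩ := β
    simp only [Fin.sum_univ_succ, Fin.cons_zero, Fin.cons_succ, zero_mul, zero_add]
    simpa using hβ
  · simp
  · rintro ⟨α, hα, h0⟩
    ext j
    refine Fin.cases ?_ ?_ j <;> simp [h0]
  · rintro ⟨β, hβ⟩
    ext j
    simp

noncomputable def wequiv1 {n : ℕ} (w : Fin (n+1) → ℕ) (d : ℕ) (h : w 0 ≤ d) :
    {α : Fin (n+1) → ℕ // (∑ j, α j * w j) = d ∧ ¬ α 0 = 0}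
        ≃ {α : Fin (n+1) → ℕ // (∑ j, α j * w j) = d - w 0} := by
  refine ⟨fun α => ⟨Fin.cons (α.1 0 - 1) (fun j => α.1 j.succ), ?_⟩,
    fun α => ⟨Fin.cons (α.1 0 + 1) (fun j => α.1 j.succ), ?_, by simp⟩, ?_, ?_⟩
  · obtain ⟨α, hα, h0⟩ := α
    simp only [Fin.sum_univ_succ, Fin.cons_zero, Fin.cons_succ] at hα ⊢
    obtain ⟨a, ha⟩ : ∃ a, α 0 = a + 1 := ⟨α 0 - 1, by omega⟩
    rw [ha] at hα
    rw [ha]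
    simp only [Nat.add_sub_cancel, add_one_mul] at hα ⊢
    omega
  · obtain ⟨α, hα⟩ := α
    simp only [Fin.sum_univ_succ, Fin.cons_zero, Fin.cons_succ] at hα ⊢
    rw [add_one_mul]
    omega
  · rintro ⟨α, hα, h0⟩
    ext j
    refine Fin.cases ?_ ?_ j
    · simp; omega
    · intro i; simp
  · rintro ⟨α, hα⟩
    ext j
    refine Fin.cases ?_ ?_ j
    · simp
    · intro i; simp

lemma wcard_succ {n : ℕ} (w : Fin (n+1) → ℕ) (hw : ∀ j, 0 < w j) (d : ℕ) :
    wcard w d = wcard (w ∘ Fin.succ) d + (if w 0 ≤ d then wcard w (d - w 0) else 0) := by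
  classical
  haveI : Finite {α : Fin (n+1) → ℕ // (∑ j, α j * w j) = d} := by
    haveI := wsol_finite (w := w) hw 0 d
    exact Finite.of_equiv _ (Equiv.subtypeEquivRight
      (p := fun α : Fin (n+1) → ℕ => (∑ j, α j * w j) + 0 = d) fun α => by simp)
  have hsplit : wcard w d
      = Nat.card {α : Fin (n+1) → ℕ // (∑ j, α j * w j) = d ∧ α 0 = 0}
      + Nat.card {α : Fin (n+1) → ℕ // (∑ j, α j * w j) = d ∧ ¬ α 0 = 0} :=
    nat_card_split _ _
  rw [hsplit, Nat.card_congr (wequiv0 w d)]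
  by_cases h : w 0 ≤ d
  · rw [Nat.card_congr (wequiv1 w d h), if_pos h]
    rfl
  · have e2 : IsEmpty {α : Fin (n+1) → ℕ // (∑ j, α j * w j) = d ∧ ¬ α 0 = 0} := by
      refine ⟨fun α => ?_⟩
      obtain ⟨α, hα, h0⟩ := α
      apply h
      calc w 0 ≤ α 0 * w 0 := Nat.le_mul_of_pos_left _ (Nat.pos_of_ne_zero h0)
        _ ≤ ∑ j, α j * w j :=
          Finset.single_le_sum (f := fun j => α j * w j) (fun _ _ => Nat.zero_le _)
            (Finset.mem_univ 0)
        _ = d := hα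
    rw [if_neg h, @Nat.card_of_isEmpty _ e2]
    rfl

lemma wcard_zero (d : ℕ) : wcard (fun j : Fin 0 => 0) d = if d = 0 then 1 else 0 := by
  unfold wcard
  rcases eq_or_ne d 0 with rfl | hd
  · rw [if_pos rfl]
    haveI : Unique {α : Fin 0 → ℕ // ∑ j, α j * 0 = 0} :=
      ⟨⟨⟨fun j => 0, by simp⟩⟩, fun a => Subtype.ext (funext fun j => j.elim0)⟩
    exact Nat.card_unique
  · rw [if_neg hd]
    haveI : IsEmpty {α : Fin 0 → ℕ // ∑ j, α j * 0 = d} :=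
      ⟨fun α => hd (by simpa using α.2.symm)⟩
    exact Nat.card_of_isEmpty

lemma wgen {n : ℕ} (w : Fin n → ℕ) (hw : ∀ j, 0 < w j) :
    (PowerSeries.mk fun d => (wcard w d : ℤ)) *
      ∏ j, (1 - (PowerSeries.X : PowerSeries ℤ) ^ w j) = 1 := by
  induction n with
  | zero =>
    rw [Finset.univ_eq_empty, Finset.prod_empty, mul_one]
    ext d
    rw [PowerSeries.coeff_mk, PowerSeries.coeff_one]
    have : w = fun j : Fin 0 => 0 := funext fun j => j.elim0
    rw [this, wcard_zero]
    split_ifs <;> simp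
  | succ n ih =>
    have key : (PowerSeries.mk fun d => (wcard w d : ℤ)) *
        (1 - (PowerSeries.X : PowerSeries ℤ) ^ w 0)
        = PowerSeries.mk fun d => (wcard (w ∘ Fin.succ) d : ℤ) := by
      ext d
      rw [mul_sub, mul_one, map_sub, PowerSeries.coeff_mul_X_pow',
        PowerSeries.coeff_mk, PowerSeries.coeff_mk]
      rw [wcard_succ w hw d]
      split_ifs with h
      · rw [PowerSeries.coeff_mk]
        push_cast
        ring
      · rw [PowerSeries.coeff_mk]
        push_cast
        ring
    rw [Fin.prod_univ_succ, ← mul_assoc, key]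
    have := ih (w ∘ Fin.succ) (fun j => hw j.succ)
    simpa [Function.comp] using this

lemma wcard_shift {n : ℕ} (w : Fin n → ℕ) (hw : ∀ j, 0 < w j) (c d : ℕ) :
    Nat.card {α : Fin n → ℕ // (∑ j, α j * w j) + c = d}
      = if c ≤ d then wcard w (d - c) else 0 := by
  by_cases h : c ≤ d
  · rw [if_pos h]
    exact Nat.card_congr (Equiv.subtypeEquivRight fun α => by omega)
  · rw [if_neg h]
    haveI : IsEmpty {α : Fin n → ℕ // (∑ j, α j * w j) + c = d} :=
      ⟨fun α => h (le_trans (by omega) (le_of_eq α.2))⟩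
    exact Nat.card_of_isEmpty

lemma wgen2 {n m : ℕ} (w : Fin n → ℕ) (hw : ∀ j, 0 < w j) (dg : Fin m → ℕ) :
    (PowerSeries.mk fun d =>
        (Nat.card {p : (Fin n → ℕ) × Fin m // (∑ j, p.1 j * w j) + dg p.2 = d} : ℤ))
      = (∑ i, (PowerSeries.X : PowerSeries ℤ) ^ dg i) *
          PowerSeries.mk fun d => (wcard w d : ℤ) := by
  ext d
  rw [PowerSeries.coeff_mk, Finset.sum_mul, map_sum]
  have hcoeff : ∀ i : Fin m,
      (PowerSeries.coeff d) ((PowerSeries.X : PowerSeries ℤ) ^ dg i *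
        PowerSeries.mk fun d => (wcard w d : ℤ))
      = if dg i ≤ d then (wcard w (d - dg i) : ℤ) else 0 := by
    intro i
    rw [mul_comm, PowerSeries.coeff_mul_X_pow']
    split_ifs with h
    · rw [PowerSeries.coeff_mk]
    · rfl
  simp only [hcoeff]
  -- count via sigma decomposition
  have e1 : {p : (Fin n → ℕ) × Fin m // (∑ j, p.1 j * w j) + dg p.2 = d}
      ≃ {q : Fin m × (Fin n → ℕ) // (∑ j, q.2 j * w j) + dg q.1 = d} :=
    (Equiv.prodComm _ _).subtypeEquiv (fun p => Iff.rfl)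
  have e2 := Equiv.subtypeProdEquivSigmaSubtype
    (fun (i : Fin m) (α : Fin n → ℕ) => (∑ j, α j * w j) + dg i = d)
  rw [Nat.card_congr (e1.trans e2)]
  haveI : ∀ i : Fin m, Finite {α : Fin n → ℕ // (∑ j, α j * w j) + dg i = d} :=
    fun i => wsol_finite hw (dg i) d
  haveI : ∀ i : Fin m, Fintype {α : Fin n → ℕ // (∑ j, α j * w j) + dg i = d} :=
    fun i => Fintype.ofFinite _
  rw [Nat.card_eq_fintype_card, Fintype.card_sigma]
  push_cast
  congr 1
  funext i
  rw [← Nat.card_eq_fintype_card, wcard_shift w hw (dg i) d]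
  split_ifs <;> simp

section Graded

variable {K R : Type*} [Field K] [CommRing R] [Algebra K R]
variable (𝒜 : ℕ → Submodule K R) [GradedAlgebra 𝒜]

/-- a homogeneous basis of `R` restricts to a basis of each graded component -/
lemma span_graded {ι : Type*} (v : Module.Basis ι K R) (σ : ι → ℕ) (hv : ∀ k, v k ∈ 𝒜 (σ k))
    (d : ℕ) {x : R} (hx : x ∈ 𝒜 d) :
    x ∈ Submodule.span K (v '' {k | σ k = d}) := by
  classical
  let π : R →ₗ[K] R :=
    (𝒜 d).subtype ∘ₗ
      (DirectSum.component K ℕ (fun i => 𝒜 i) d) ∘ₗ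
        (DirectSum.decomposeLinearEquiv 𝒜).toLinearMap
  have hπ : ∀ (y : R) (i : ℕ), y ∈ 𝒜 i → π y = if i = d then y else 0 := by
    intro y i hy
    split_ifs with h
    · subst h
      exact DirectSum.decompose_of_mem_same 𝒜 hy
    · exact DirectSum.decompose_of_mem_ne 𝒜 hy h
  have hxd : π x = x := by rw [hπ x d hx, if_pos rfl]
  have hrepr := v.linearCombination_repr x
  rw [← hxd, ← hrepr, Finsupp.linearCombination_apply, Finsupp.sum, map_sum]
  apply Submodule.sum_mem
  intro k hk
  rw [map_smul, hπ (v k) (σ k) (hv k)]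
  split_ifs with h
  · exact Submodule.smul_mem _ _ (Submodule.subset_span ⟨k, h, rfl⟩)
  · rw [smul_zero]
    exact Submodule.zero_mem _

noncomputable def gradedBasis {ι : Type*} (v : Module.Basis ι K R) (σ : ι → ℕ)
    (hv : ∀ k, v k ∈ 𝒜 (σ k)) (d : ℕ) :
    Module.Basis {k // σ k = d} K (𝒜 d) := by
  refine Module.Basis.mk (v := fun k : {k // σ k = d} => (⟨v k.1, by have h := hv k.1; rwa [k.2] at h⟩ : 𝒜 d)) ?_ ?_
  · apply LinearIndependent.of_comp (𝒜 d).subtype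
    have h1 := v.linearIndependent.comp Subtype.val (Subtype.val_injective (p := fun k => σ k = d))
    exact h1
  · rintro ⟨x, hx⟩ -
    have hx' := span_graded 𝒜 v σ hv d hx
    have him : v '' {k | σ k = d}
        = (𝒜 d).subtype '' (Set.range fun k : {k // σ k = d} =>
            (⟨v k.1, by have h := hv k.1; rwa [k.2] at h⟩ : 𝒜 d)) := by
      rw [← Set.range_comp]
      ext y
      constructor
      · rintro ⟨k, hk, rfl⟩
        exact ⟨⟨k, hk⟩, rfl⟩
      · rintro ⟨k, rfl⟩
        exact ⟨k.1, k.2, rfl⟩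
    rw [him, ← Submodule.map_span] at hx'
    obtain ⟨y, hy, hyx⟩ := hx'
    have : y = ⟨x, hx⟩ := Subtype.ext hyx
    rwa [← this]

lemma graded_dim {ι : Type*} (v : Module.Basis ι K R) (σ : ι → ℕ)
    (hv : ∀ k, v k ∈ 𝒜 (σ k)) (d : ℕ) [Finite {k // σ k = d}] :
    FiniteDimensional K (𝒜 d) ∧ Module.finrank K (𝒜 d) = Nat.card {k // σ k = d} := by
  haveI := Fintype.ofFinite {k // σ k = d}
  have hb := gradedBasis 𝒜 v σ hv d
  exact ⟨Module.Finite.of_basis hb,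
    by rw [Module.finrank_eq_card_basis hb, Nat.card_eq_fintype_card]⟩

end Graded




/-- In the setting of a Noetherian connected graded domain `R` over a field
`K` which is a free module with homogeneous basis `g₁,…,g_m` over the subalgebra generated by
algebraically independent homogeneous elements `f₁,…,f_n` of positive degree, every homogeneous
component `R_d` is finite-dimensional and the Hilbert series satisfies
`(Σ_d dim_K R_d · t^d) · Π_j (1 − t^{deg f_j}) = t^{deg g₁} + … + t^{deg g_m}` in `ℤ⟦t⟧`. -/
theorem stmt3 {K R : Type*} [Field K] [CommRing R] [Algebra K R]
    [IsNoetherianRing R] [IsDomain R]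
    (𝒜 : ℕ → Submodule K R) [GradedAlgebra 𝒜] (h0 : 𝒜 0 = 1)
    {n : ℕ} (f : Fin n → R) (df : Fin n → ℕ)
    (hf : ∀ j, f j ∈ 𝒜 (df j)) (hdf : ∀ j, 0 < df j)
    (hind : AlgebraicIndependent K f)
    {m : ℕ} (g : Fin m → R) (dg : Fin m → ℕ) (hg : ∀ i, g i ∈ 𝒜 (dg i))
    (b : Module.Basis (Fin m) (Algebra.adjoin K (Set.range f)) R) (hb : ∀ i, b i = g i) :
    (∀ d : ℕ, FiniteDimensional K (𝒜 d)) ∧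
    (PowerSeries.mk fun d => (Module.finrank K (𝒜 d) : ℤ)) *
        ∏ j : Fin n, (1 - (PowerSeries.X : PowerSeries ℤ) ^ df j) =
      ∑ i : Fin m, (PowerSeries.X : PowerSeries ℤ) ^ dg i := by
  classical
  -- the big homogeneous K-basis of R
  let bA : Module.Basis (Fin n →₀ ℕ) K (Algebra.adjoin K (Set.range f)) :=
    (MvPolynomial.basisMonomials (Fin n) K).map hind.aevalEquiv.toLinearEquiv
  let v : Module.Basis ((Fin n →₀ ℕ) × Fin m) K R := bA.smulTower b
  let σ : (Fin n →₀ ℕ) × Fin m → ℕ := fun p => (∑ j, p.1 j * df j) + dg p.2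
  have hval : ∀ p : (Fin n →₀ ℕ) × Fin m, v p = (∏ j, f j ^ p.1 j) * g p.2 := by
    rintro ⟨α, i⟩
    have happ : v (α, i) = bA α • b i := Module.Basis.smulTower_apply bA b (α, i)
    rw [happ, hb i, Algebra.smul_def]
    have h1 : bA α = hind.aevalEquiv (MvPolynomial.monomial α 1) := by
      simp only [bA, Module.Basis.map_apply, AlgEquiv.toLinearEquiv_apply]
      rw [congrFun (MvPolynomial.coe_basisMonomials (Fin n) K) α]
    rw [h1, hind.algebraMap_aevalEquiv, MvPolynomial.aeval_monomial, map_one, one_mul]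
    congr 1
    rw [Finsupp.prod_fintype]
    intro j
    exact pow_zero (f j)
  have hv : ∀ p : (Fin n →₀ ℕ) × Fin m, v p ∈ 𝒜 (σ p) := by
    rintro ⟨α, i⟩
    rw [hval ⟨α, i⟩]
    apply SetLike.mul_mem_graded _ (hg i)
    have := SetLike.prod_pow_mem_graded 𝒜 df f (fun j => α j)
      (F := Finset.univ) (fun j _ => hf j)
    have hsum : ∑ j : Fin n, (α j) • df j = ∑ j : Fin n, α j * df j := by
      simp [smul_eq_mul]
    rwa [hsum] at this
  -- finiteness of the fibers
  have efib : ∀ d : ℕ, {p : (Fin n →₀ ℕ) × Fin m // σ p = d}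
      ≃ {p : (Fin n → ℕ) × Fin m // (∑ j, p.1 j * df j) + dg p.2 = d} := fun d =>
    (Finsupp.equivFunOnFinite.prodCongr (Equiv.refl (Fin m))).subtypeEquiv
      (fun p => Iff.rfl)
  haveI hfin2 : ∀ d : ℕ, Finite {p : (Fin n → ℕ) × Fin m //
      (∑ j, p.1 j * df j) + dg p.2 = d} := by
    intro d
    haveI : ∀ i : Fin m, Finite {α : Fin n → ℕ // (∑ j, α j * df j) + dg i = d} :=
      fun i => wsol_finite hdf (dg i) d
    have e1 : {p : (Fin n → ℕ) × Fin m // (∑ j, p.1 j * df j) + dg p.2 = d}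
        ≃ {q : Fin m × (Fin n → ℕ) // (∑ j, q.2 j * df j) + dg q.1 = d} :=
      (Equiv.prodComm _ _).subtypeEquiv (fun p => Iff.rfl)
    have e2 := Equiv.subtypeProdEquivSigmaSubtype
      (fun (i : Fin m) (α : Fin n → ℕ) => (∑ j, α j * df j) + dg i = d)
    exact Finite.of_equiv _ (e1.trans e2).symm
  haveI hfib : ∀ d : ℕ, Finite {p : (Fin n →₀ ℕ) × Fin m // σ p = d} :=
    fun d => Finite.of_equiv _ (efib d).symm
  have hdim := fun d => graded_dim 𝒜 v σ hv d
  refine ⟨fun d => (hdim d).1, ?_⟩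
  have hcard : ∀ d : ℕ, (Module.finrank K (𝒜 d) : ℤ)
      = (Nat.card {p : (Fin n → ℕ) × Fin m //
          (∑ j, p.1 j * df j) + dg p.2 = d} : ℤ) := by
    intro d
    rw [(hdim d).2, Nat.card_congr (efib d)]
  have hmk : (PowerSeries.mk fun d => (Module.finrank K (𝒜 d) : ℤ))
      = PowerSeries.mk fun d => (Nat.card {p : (Fin n → ℕ) × Fin m //
          (∑ j, p.1 j * df j) + dg p.2 = d} : ℤ) := by
    ext d
    rw [PowerSeries.coeff_mk, PowerSeries.coeff_mk, hcard d]
  rw [hmk, wgen2 df hdf dg, mul_assoc, wgen df hdf, mul_one]
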